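/- On M = ⊕ᵏT*Q × ℝᵏ with η^α = ds^α − p^α_a dyᵃ and Hamiltonian function H, let Ω^α = −H dη^α + dH ∧ η^α. If a k-vector field X = (X_α) satisfies ι_{X_α}Ω^α = 0 and ι_{X_α}η^α = −H at a point where H ≠ 0, then X satisfies the Hamilton–de Donder–Weyl equations ι_{X_α} dη^α = dH − (L_{R_α}H) η^α and ι_{X_α}η^α = −H at that point. -/
import Mathlib


/-- The canonical model `(⊕ᵏ T*Q) × ℝᵏ` in coordinates `(y, p, s)`. -/
abbrev KModel (n k : ℕ) := (Fin n → ℝ) × (Fin k → Fin n → ℝ) × (Fin k → ℝ)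

/-- `η^α = ds^α − p^α_a dy^a` at the point `m` on the tangent vector `v`. -/
def ketaP (n k : ℕ) (α : Fin k) (m v : KModel n k) : ℝ :=
  v.2.2 α - ∑ a, m.2.1 α a * v.1 a

/-- `dη^α = dy^a ∧ dp^α_a` on tangent vectors `u, v`. -/
def kdeta (n k : ℕ) (α : Fin k) (u v : KModel n k) : ℝ :=
  ∑ a, (u.1 a * v.2.1 α a - v.1 a * u.2.1 α a)

/-- coordinate tangent direction `∂/∂s^α`. -/
def sdir (n k : ℕ) (α : Fin k) : KModel n k :=
  (0, 0, Pi.single α (1:ℝ))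

/-- The 2-form `Ω^α = −H dη^α + dH ∧ η^α` at the point `m`. -/
noncomputable def OmegaH (n k : ℕ) (H : KModel n k → ℝ) (α : Fin k)
    (m u v : KModel n k) : ℝ :=
  -(H m) * kdeta n k α u v
    + fderiv ℝ H m u * ketaP n k α m v - fderiv ℝ H m v * ketaP n k α m u

/-- at a point where `H ≠ 0`, a solution of the Reeb-free equations
`ι_{X_α}Ω^α = 0`, `ι_{X_α}η^α = −H` solves the Hamilton–de Donder–Weyl equations
`ι_{X_α}dη^α = dH − (L_{R_α}H)η^α`, `ι_{X_α}η^α = −H` (with `R_α = ∂/∂s^α`). -/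
theorem stmt_4 (n k : ℕ) (H : KModel n k → ℝ) (m : KModel n k)
    (hH : DifferentiableAt ℝ H m) (hm : H m ≠ 0)
    (X : Fin k → KModel n k)
    (h1 : ∀ v : KModel n k, (∑ α, OmegaH n k H α m (X α) v) = 0)
    (h2 : (∑ α, ketaP n k α m (X α)) = -H m) :
    (∀ v : KModel n k,
      (∑ α, kdeta n k α (X α) v) =
        fderiv ℝ H m v - ∑ α, fderiv ℝ H m (sdir n k α) * ketaP n k α m v) ∧
    (∑ α, ketaP n k α m (X α)) = -H m := by
  refine ⟨?_, h2⟩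
  have key : ∀ β, fderiv ℝ H m (X β) = -(H m) * fderiv ℝ H m (sdir n k β) := by
    intro β
    have hβ := h1 (sdir n k β)
    have hk0 : ∀ α, kdeta n k α (X α) (sdir n k β) = 0 := by
      intro α; simp [kdeta, sdir]
    have hη : ∀ α, ketaP n k α m (sdir n k β) = if α = β then 1 else 0 := by
      intro α; simp [ketaP, sdir, Pi.single_apply]
    simp only [OmegaH, hk0, hη, mul_zero, neg_zero, zero_add, mul_ite, mul_one] at hβ
    rw [Finset.sum_sub_distrib, Finset.sum_ite_eq' Finset.univ β, ← Finset.mul_sum, h2]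
      at hβ
    simp at hβ
    linarith
  intro v
  have hv := h1 v
  simp only [OmegaH] at hv
  rw [Finset.sum_sub_distrib, Finset.sum_add_distrib, ← Finset.mul_sum (a := -(H m)),
    ← Finset.mul_sum (a := fderiv ℝ H m v), h2] at hv
  have e1 : (∑ α, fderiv ℝ H m (X α) * ketaP n k α m v)
      = -(H m) * ∑ α, fderiv ℝ H m (sdir n k α) * ketaP n k α m v := by
    rw [Finset.mul_sum]
    exact Finset.sum_congr rfl fun α _ => by rw [key α]; ring
  rw [e1] at hv
  apply mul_left_cancel₀ (neg_ne_zero.mpr hm)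
  linear_combination hv
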